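/- Convergence of the mixture approximation: assume for every x̄ ∈ R^d and almost every y, k(y|x) → k(y|x̄) as ‖x-x̄‖_∞ → 0. Then for any ε > 0 and any finite time t, there exists a sequence of finite measurable partitions {𝒳_0, ..., 𝒳_{t-1}} of R^d such that the iterative mixture approximation satisfies TV(P_t, P̂_t) ≤ ε. -/

import Mathlib

open MeasureTheory Filter

noncomputable def tv {α : Type*} [MeasurableSpace α] (P Q : Measure α) : ℝ :=
  ⨆ A : {A : Set α // MeasurableSet A}, |(P A.1).toReal - (Q A.1).toReal|


open MeasureTheory Filter Set ENNReal

section AuxiliaryLemmas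


lemma partition_of_cover {α : Type*} [MeasurableSpace α] {ι : Type*} [Fintype ι]
    (B : ι → Set α) (hB : ∀ i, MeasurableSet (B i)) (hcov : (⋃ i, B i) = Set.univ) :
    ∃ (K : ℕ) (X : Fin K → Set α) (xr : Fin K → α) (f : Fin K → ι),
      (∀ j, MeasurableSet (X j)) ∧ Pairwise (Function.onFun Disjoint X) ∧
      (⋃ j, X j) = Set.univ ∧ (∀ j, xr j ∈ X j) ∧ ∀ j, X j ⊆ B (f j) := by
  classical
  set n := Fintype.card ι with hn
  set e := Fintype.equivFin ι with he
  set g : ℕ → Set α := fun m => if h : m < n then B (e.symm ⟨m, h⟩) else ∅ with hg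
  set D : ℕ → Set α := disjointed g with hD
  have hgm : ∀ m, MeasurableSet (g m) := by
    intro m; by_cases h : m < n <;> simp [hg, h, hB]
  have hDm : ∀ m, MeasurableSet (D m) := MeasurableSet.disjointed hgm
  have hDsub : ∀ m, D m ⊆ g m := fun m => disjointed_subset g m
  have hDU : (⋃ m, D m) = Set.univ := by
    rw [hD, iUnion_disjointed]
    apply Set.eq_univ_of_univ_subset
    rw [← hcov]
    rintro x ⟨s, ⟨i, rfl⟩, hx⟩
    exact Set.mem_iUnion.2 ⟨(e i : ℕ), by simp [hg, (e i).isLt, Equiv.symm_apply_apply] at *; exact ⟨(e i).isLt, hx⟩⟩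
  set S : Finset ℕ := (Finset.range n).filter (fun m => (D m).Nonempty) with hS
  have hmemS : ∀ m, (D m).Nonempty → m ∈ S := by
    intro m hm
    by_cases h : m < n
    · exact Finset.mem_filter.2 ⟨Finset.mem_range.2 h, hm⟩
    · exfalso
      have hge : g m = ∅ := by simp [hg, h]
      obtain ⟨x, hx⟩ := hm
      have hxg := hDsub m hx
      rw [hge] at hxg
      exact hxg
  set E := S.orderIsoOfFin (rfl : S.card = S.card) with hE
  have hne : ∀ j : Fin S.card, (D (E j : ℕ)).Nonempty := by
    intro j
    have := (E j).2
    exact (Finset.mem_filter.1 this).2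
  have hlt : ∀ j : Fin S.card, (E j : ℕ) < n := by
    intro j
    exact Finset.mem_range.1 (Finset.mem_filter.1 (E j).2).1
  refine ⟨S.card, fun j => D (E j : ℕ), fun j => (hne j).some,
    fun j => e.symm ⟨(E j : ℕ), hlt j⟩, fun j => hDm _, ?_, ?_, fun j => (hne j).some_mem, ?_⟩
  · intro j j' hjj'
    have : (E j : ℕ) ≠ (E j' : ℕ) := by
      intro h
      exact hjj' (E.injective (Subtype.ext h))
    exact disjoint_disjointed g this
  · apply Set.eq_univ_of_univ_subset
    rw [← hDU]
    rintro x ⟨s, ⟨m, rfl⟩, hx⟩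
    have hmS : m ∈ S := hmemS m ⟨x, hx⟩
    refine Set.mem_iUnion.2 ⟨E.symm ⟨m, hmS⟩, ?_⟩
    simpa using hx
  · intro j x hx
    have h2 := hDsub _ hx
    simp only [hg] at h2
    rwa [dif_pos (hlt j)] at h2


lemma kernel_integrable {d : ℕ} (k : (Fin d → ℝ) → (Fin d → ℝ) → ℝ)
    (hk_meas : Measurable (Function.uncurry k))
    (hk_prob : ∀ x, ∫ y, k x y = 1) (x : Fin d → ℝ) :
    Integrable (k x) (volume : Measure (Fin d → ℝ)) := by
  by_contra h
  have h2 := hk_prob x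
  rw [integral_undef h] at h2
  exact one_ne_zero h2.symm

lemma scheffe {d : ℕ} (k : (Fin d → ℝ) → (Fin d → ℝ) → ℝ)
    (hk_meas : Measurable (Function.uncurry k))
    (hk_nonneg : ∀ x y, 0 ≤ k x y)
    (hk_prob : ∀ x, ∫ y, k x y = 1)
    (hk_cont : ∀ xbar : Fin d → ℝ, ∀ᵐ y : (Fin d → ℝ),
      Tendsto (fun x => k x y) (nhds xbar) (nhds (k xbar y)))
    (xbar : Fin d → ℝ) :
    Tendsto (fun x => ∫ y, |k x y - k xbar y|) (nhds xbar) (nhds 0) := by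
  have hkx : ∀ x, Measurable (k x) := fun x => hk_meas.of_uncurry_left
  have hint : ∀ x, Integrable (k x) volume := kernel_integrable k hk_meas hk_prob
  have hminmeas : ∀ x, Measurable (fun y => min (k x y) (k xbar y)) :=
    fun x => (hkx x).min (hkx xbar)
  have hminint : ∀ x, Integrable (fun y => min (k x y) (k xbar y)) volume := by
    intro x
    refine (hint xbar).mono (hminmeas x).aestronglyMeasurable (ae_of_all _ fun y => ?_)
    rw [Real.norm_eq_abs, Real.norm_eq_abs, abs_of_nonneg (le_min (hk_nonneg x y) (hk_nonneg xbar y)),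
      abs_of_nonneg (hk_nonneg xbar y)]
    exact min_le_right _ _
  have key : Tendsto (fun x => ∫ y, min (k x y) (k xbar y)) (nhds xbar)
      (nhds (∫ y, k xbar y)) := by
    refine tendsto_integral_filter_of_dominated_convergence (fun y => k xbar y)
      (Eventually.of_forall fun x => (hminmeas x).aestronglyMeasurable)
      (Eventually.of_forall fun x => ae_of_all _ fun y => ?_)
      (hint xbar) ?_
    · rw [Real.norm_eq_abs, abs_of_nonneg (le_min (hk_nonneg x y) (hk_nonneg xbar y))]
      exact min_le_right _ _
    · filter_upwards [hk_cont xbar] with y hy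
      have := hy.min (tendsto_const_nhds (x := k xbar y))
      simpa using this
  rw [hk_prob xbar] at key
  have heq : ∀ x, ∫ y, |k x y - k xbar y| = 2 - 2 * ∫ y, min (k x y) (k xbar y) := by
    intro x
    have h1 : ∀ y, |k x y - k xbar y| = k x y + k xbar y - 2 * min (k x y) (k xbar y) := by
      intro y
      rcases le_total (k x y) (k xbar y) with h | h
      · rw [min_eq_left h, abs_of_nonpos (by linarith)]; ring
      · rw [min_eq_right h, abs_of_nonneg (by linarith)]; ring
    calc ∫ y, |k x y - k xbar y|
        = ∫ y, (k x y + k xbar y - 2 * min (k x y) (k xbar y)) := by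
          exact integral_congr_ae (ae_of_all _ h1)
      _ = (∫ y, (k x y + k xbar y)) - ∫ y, 2 * min (k x y) (k xbar y) := by
          exact integral_sub ((hint x).add (hint xbar)) ((hminint x).const_mul 2)
      _ = 2 - 2 * ∫ y, min (k x y) (k xbar y) := by
          rw [integral_add (hint x) (hint xbar), hk_prob, hk_prob, integral_const_mul]
          ring
  have : Tendsto (fun x => 2 - 2 * ∫ y, min (k x y) (k xbar y)) (nhds xbar) (nhds 0) := by
    have := (tendsto_const_nhds (x := (2:ℝ)) (f := nhds xbar)).sub (key.const_mul 2)
    simpa using this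
  exact this.congr (fun x => (heq x).symm)

section KernelStep
variable {d : ℕ}

lemma step_lemma (k : (Fin d → ℝ) → (Fin d → ℝ) → ℝ)
    (hk_meas : Measurable (Function.uncurry k))
    (hk_nonneg : ∀ x y, 0 ≤ k x y)
    (hk_prob : ∀ x, ∫ y, k x y = 1)
    (hk_cont : ∀ xbar : Fin d → ℝ, ∀ᵐ y : (Fin d → ℝ),
      Tendsto (fun x => k x y) (nhds xbar) (nhds (k xbar y)))
    (δ : ℝ) (q : (Fin d → ℝ) → ℝ) :
    ∃ (K : ℕ) (X : Fin K → Set (Fin d → ℝ)) (xr : Fin K → (Fin d → ℝ)),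
      (∀ j, MeasurableSet (X j)) ∧ Pairwise (Function.onFun Disjoint X) ∧
      (⋃ j, X j) = Set.univ ∧ (∀ j, xr j ∈ X j) ∧
      (0 < δ → Measurable q → (∀ x, 0 ≤ q x) → Integrable q volume → (∫ x, q x) = 1 →
        ∑ j, ∫⁻ x in X j, (∫⁻ y, ‖k x y - k (xr j) y‖₊) * ENNReal.ofReal (q x) ≤
          ENNReal.ofReal δ) := by
  classical
  by_cases hconds : 0 < δ ∧ Measurable q ∧ (∀ x, 0 ≤ q x) ∧ Integrable q volume ∧ (∫ x, q x) = 1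
  case neg =>
    refine ⟨1, fun _ => Set.univ, fun _ => fun _ => 0, fun _ => MeasurableSet.univ,
      Subsingleton.pairwise, by rw [Set.iUnion_const], fun _ => Set.mem_univ _, ?_⟩
    intro h1 h2 h3 h4 h5
    exact absurd ⟨h1, h2, h3, h4, h5⟩ hconds
  case pos =>
  obtain ⟨hδ, hqm, hq0, hqi, hq1⟩ := hconds
  have hkx : ∀ x, Measurable (k x) := fun x => hk_meas.of_uncurry_left
  have hint : ∀ x, Integrable (k x) volume := kernel_integrable k hk_meas hk_prob
  have hlint1 : ∀ x, (∫⁻ y, ENNReal.ofReal (k x y)) = 1 := by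
    intro x
    rw [← ofReal_integral_eq_lintegral_ofReal (hint x) (ae_of_all _ (hk_nonneg x)), hk_prob]
    exact ENNReal.ofReal_one
  -- the L¹ distance in ENNReal form
  set Etld : (Fin d → ℝ) → (Fin d → ℝ) → ℝ≥0∞ :=
    fun x x' => ∫⁻ y, ‖k x y - k x' y‖₊ with hEtld
  have hEeq : ∀ x x', Etld x x' = ENNReal.ofReal (∫ y, |k x y - k x' y|) := by
    intro x x'
    have hi : Integrable (fun y => |k x y - k x' y|) volume :=
      (Integrable.abs ((hint x).sub (hint x')) : )
    rw [ofReal_integral_eq_lintegral_ofReal hi (ae_of_all _ fun y => abs_nonneg _)]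
    simp only [hEtld]
    congr 1
    funext y
    rw [← Real.enorm_eq_ofReal_abs, enorm_eq_nnnorm]
  have hE2 : ∀ x x', Etld x x' ≤ 2 := by
    intro x x'
    calc Etld x x' ≤ ∫⁻ y, (ENNReal.ofReal (k x y) + ENNReal.ofReal (k x' y)) := by
          apply lintegral_mono
          intro y
          show (‖k x y - k x' y‖₊ : ℝ≥0∞) ≤ ENNReal.ofReal (k x y) + ENNReal.ofReal (k x' y)
          rw [← enorm_eq_nnnorm, Real.enorm_eq_ofReal_abs, ← ENNReal.ofReal_add (hk_nonneg x y) (hk_nonneg x' y)]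
          refine ENNReal.ofReal_le_ofReal ?_
          calc |k x y - k x' y| ≤ |k x y| + |k x' y| := abs_sub _ _
            _ = k x y + k x' y := by
                rw [abs_of_nonneg (hk_nonneg x y), abs_of_nonneg (hk_nonneg x' y)]
      _ = 1 + 1 := by
          rw [lintegral_add_left ((hkx x).ennreal_ofReal), hlint1, hlint1]
      _ = 2 := one_add_one_eq_two
  -- tail bound
  set μq : Measure (Fin d → ℝ) := volume.withDensity (fun x => ENNReal.ofReal (q x)) with hμq
  have hμquniv : μq Set.univ = 1 := by
    rw [hμq, withDensity_apply _ MeasurableSet.univ, Measure.restrict_univ,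
      ← ofReal_integral_eq_lintegral_ofReal hqi (ae_of_all _ hq0), hq1, ENNReal.ofReal_one]
  have hμqle : ∀ s, μq s ≤ 1 := fun s => hμquniv ▸ measure_mono (Set.subset_univ s)
  have htail : ∃ R : ℕ, μq (Metric.closedBall (0 : Fin d → ℝ) R)ᶜ ≤ ENNReal.ofReal (δ / 8) := by
    have hmono : Antitone (fun n : ℕ => (Metric.closedBall (0 : Fin d → ℝ) n)ᶜ) := by
      intro a b hab
      exact Set.compl_subset_compl.2 (Metric.closedBall_subset_closedBall (by exact_mod_cast hab))
    have hinter : (⋂ n : ℕ, (Metric.closedBall (0 : Fin d → ℝ) n)ᶜ) = ∅ := by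
      rw [← Set.compl_iUnion]
      rw [Set.compl_empty_iff]
      apply Set.eq_univ_of_forall
      intro x
      obtain ⟨n, hn⟩ := exists_nat_ge ‖x‖
      exact Set.mem_iUnion.2 ⟨n, by simpa [Metric.mem_closedBall, dist_zero_right] using hn⟩
    have htend : Tendsto (fun n : ℕ => μq (Metric.closedBall (0 : Fin d → ℝ) n)ᶜ) atTop
        (nhds 0) := by
      have := tendsto_measure_iInter_atTop (μ := μq)
        (fun n => (Metric.isClosed_closedBall.measurableSet.compl).nullMeasurableSet) hmono
        ⟨0, ne_top_of_le_ne_top one_ne_top (hμqle _)⟩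
      rw [hinter] at this
      simpa [Function.comp_def] using this
    have := htend.eventually_lt_const (by positivity : (0:ℝ≥0∞) < ENNReal.ofReal (δ / 8))
    obtain ⟨R, hR⟩ := this.exists
    exact ⟨R, hR.le⟩
  obtain ⟨R, hR⟩ := htail
  set C := Metric.closedBall (0 : Fin d → ℝ) R with hC
  -- radii from Scheffé
  have hrad : ∀ xbar : Fin d → ℝ, ∃ r > 0, ∀ x ∈ Metric.ball xbar r,
      ∫ y, |k x y - k xbar y| < δ / 8 := by
    intro xbar
    have := (scheffe k hk_meas hk_nonneg hk_prob hk_cont xbar).eventually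
      (eventually_lt_nhds (by positivity : (0:ℝ) < δ / 8))
    rw [Metric.eventually_nhds_iff_ball] at this
    obtain ⟨r, hr0, hr⟩ := this
    exact ⟨r, hr0, hr⟩
  choose r hr0 hrE using hrad
  -- finite subcover of C
  have hcompact : IsCompact C := isCompact_closedBall _ _
  obtain ⟨s, hs⟩ := hcompact.elim_finite_subcover (fun xbar : Fin d → ℝ => Metric.ball xbar (r xbar))
    (fun xbar => Metric.isOpen_ball) (fun x hx => Set.mem_iUnion.2 ⟨x, Metric.mem_ball_self (hr0 x)⟩)
  -- the cover family
  set B : Option ↥s → Set (Fin d → ℝ) := fun o => match o with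
    | none => Cᶜ
    | some i => Metric.ball (i : Fin d → ℝ) (r i) with hB
  have hBm : ∀ o, MeasurableSet (B o) := by
    rintro (_ | i)
    · exact Metric.isClosed_closedBall.measurableSet.compl
    · exact Metric.isOpen_ball.measurableSet
  have hBcov : (⋃ o, B o) = Set.univ := by
    apply Set.eq_univ_of_forall
    intro x
    by_cases hx : x ∈ C
    · obtain ⟨i, his, hxi⟩ := Set.mem_iUnion₂.1 (hs hx)
      exact Set.mem_iUnion.2 ⟨some ⟨i, his⟩, hxi⟩
    · exact Set.mem_iUnion.2 ⟨none, hx⟩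
  obtain ⟨K, X, xr, f, hXm, hXd, hXu, hxrX, hXB⟩ := partition_of_cover B hBm hBcov
  refine ⟨K, X, xr, hXm, hXd, hXu, hxrX, ?_⟩
  intro _ _ _ _ _
  -- the bound
  have hQm : Measurable (fun x => ENNReal.ofReal (q x)) := hqm.ennreal_ofReal
  have hterm : ∀ j, (∫⁻ x in X j, Etld x (xr j) * ENNReal.ofReal (q x)) ≤
      (match f j with | none => (2:ℝ≥0∞) | some _ => ENNReal.ofReal (δ / 4)) * μq (X j) := by
    intro j
    have hbd : ∀ x ∈ X j, Etld x (xr j) * ENNReal.ofReal (q x) ≤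
        (match f j with | none => (2:ℝ≥0∞) | some _ => ENNReal.ofReal (δ / 4)) *
          ENNReal.ofReal (q x) := by
      intro x hx
      apply mul_le_mul_left
      match hfj : f j with
      | none => exact hE2 x (xr j)
      | some i =>
        have hxball : x ∈ Metric.ball (i : Fin d → ℝ) (r i) := by
          have := hXB j hx
          rwa [hfj] at this
        have hxrball : xr j ∈ Metric.ball (i : Fin d → ℝ) (r i) := by
          have := hXB j (hxrX j)
          rwa [hfj] at this
        have htri : Etld x (xr j) ≤ Etld x i + Etld (xr j) i := by
          calc Etld x (xr j) ≤ ∫⁻ y, ((‖k x y - k i y‖₊ : ℝ≥0∞) + ‖k i y - k (xr j) y‖₊) := by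
                apply lintegral_mono
                intro y
                show (‖k x y - k (xr j) y‖₊ : ℝ≥0∞) ≤ (‖k x y - k (↑i) y‖₊ : ℝ≥0∞) + ‖k (↑i) y - k (xr j) y‖₊
                rw [← ENNReal.coe_add]
                have : k x y - k (xr j) y = (k x y - k (↑i) y) + (k (↑i) y - k (xr j) y) := by ring
                rw [this]
                exact_mod_cast nnnorm_add_le _ _
            _ = Etld x i + Etld (xr j) i := by
                rw [lintegral_add_left (f := fun y => (‖k x y - k i y‖₊ : ℝ≥0∞)) (((hkx x).sub (hkx i)).enorm)]
                congr 1
                simp only [hEtld]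
                congr 1
                funext y
                rw [← nnnorm_neg]
                congr 1
                ring
        calc Etld x (xr j) ≤ Etld x i + Etld (xr j) i := htri
          _ ≤ ENNReal.ofReal (δ / 8) + ENNReal.ofReal (δ / 8) := by
              gcongr
              · rw [hEeq]
                exact ENNReal.ofReal_le_ofReal (hrE i x hxball).le
              · rw [hEeq]
                exact ENNReal.ofReal_le_ofReal (hrE i (xr j) hxrball).le
          _ = ENNReal.ofReal (δ / 4) := by
              rw [← ENNReal.ofReal_add (by positivity) (by positivity)]
              congr 1
              ring
    calc (∫⁻ x in X j, Etld x (xr j) * ENNReal.ofReal (q x))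
        ≤ ∫⁻ x in X j, (match f j with | none => (2:ℝ≥0∞) | some _ => ENNReal.ofReal (δ / 4)) *
            ENNReal.ofReal (q x) := by
          exact setLIntegral_mono (by exact (measurable_const.mul hQm)) hbd
      _ = (match f j with | none => (2:ℝ≥0∞) | some _ => ENNReal.ofReal (δ / 4)) * μq (X j) := by
          rw [lintegral_const_mul _ hQm, hμq, withDensity_apply _ (hXm j)]
  -- sum it
  have hXdisj : Set.PairwiseDisjoint (↑(Finset.univ : Finset (Fin K)) : Set (Fin K)) X := by
    intro a _ b _ hab
    exact hXd hab
  have hsum_tail : ∑ j ∈ Finset.univ.filter (fun j => f j = none), μq (X j) ≤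
      ENNReal.ofReal (δ / 8) := by
    rw [← measure_biUnion_finset (hXdisj.subset (by simp)) (fun b _ => hXm b)]
    refine le_trans (measure_mono ?_) hR
    rintro x hx
    obtain ⟨j, hj, hxj⟩ := Set.mem_iUnion₂.1 hx
    have hfj : f j = none := (Finset.mem_filter.1 hj).2
    have := hXB j hxj
    rwa [hfj] at this
  have hsum_ball : ∑ j ∈ Finset.univ.filter (fun j => f j ≠ none), μq (X j) ≤ 1 := by
    rw [← measure_biUnion_finset (hXdisj.subset (by simp)) (fun b _ => hXm b)]
    exact hμqle _
  calc ∑ j, ∫⁻ x in X j, Etld x (xr j) * ENNReal.ofReal (q x)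
      ≤ ∑ j, (match f j with | none => (2:ℝ≥0∞) | some _ => ENNReal.ofReal (δ / 4)) * μq (X j) :=
        Finset.sum_le_sum fun j _ => hterm j
    _ = (∑ j ∈ Finset.univ.filter (fun j => f j = none), 2 * μq (X j)) +
        ∑ j ∈ Finset.univ.filter (fun j => f j ≠ none), ENNReal.ofReal (δ / 4) * μq (X j) := by
        rw [← Finset.sum_filter_add_sum_filter_not Finset.univ (fun j => f j = none)]
        congr 1
        · apply Finset.sum_congr rfl
          intro j hj
          rw [(Finset.mem_filter.1 hj).2]
        · apply Finset.sum_congr rfl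
          intro j hj
          have := (Finset.mem_filter.1 hj).2
          match hfj : f j with
          | none => exact absurd hfj this
          | some i => rfl
    _ ≤ 2 * ENNReal.ofReal (δ / 8) + ENNReal.ofReal (δ / 4) * 1 := by
        gcongr
        · rw [← Finset.mul_sum]
          exact mul_le_mul_right hsum_tail 2
        · rw [← Finset.mul_sum]
          exact mul_le_mul_right hsum_ball _
    _ ≤ ENNReal.ofReal δ := by
        rw [mul_one, ← ENNReal.ofReal_ofNat, ← ENNReal.ofReal_mul (by norm_num),
          ← ENNReal.ofReal_add (by positivity) (by positivity)]
        apply ENNReal.ofReal_le_ofReal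
        have h28 : 2 * (δ / 8) + δ / 4 = δ / 2 := by ring
        rw [h28]
        linarith

end KernelStep

end AuxiliaryLemmas

/-- convergence of the mixture approximation: for any `ε > 0` and finite
time `t`, there exist finite measurable partitions (one per time step, with
representative points) such that the resulting iterative mixture approximation is
`ε`-close in total variation to the true distribution at time `t`. -/
theorem mixture_approximation_convergence {d : ℕ}
    (k : (Fin d → ℝ) → (Fin d → ℝ) → ℝ)
    (hk_meas : Measurable (Function.uncurry k))
    (hk_nonneg : ∀ x y, 0 ≤ k x y)
    (hk_prob : ∀ x, ∫ y, k x y = 1)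
    -- a.e. continuity of the kernel density in the initial point (sup norm topology,
    -- which coincides with the product topology on `Fin d → ℝ`)
    (hk_cont : ∀ xbar : Fin d → ℝ, ∀ᵐ y : (Fin d → ℝ),
      Tendsto (fun x => k x y) (nhds xbar) (nhds (k xbar y)))
    -- the true densities, propagated through the kernel
    (p : ℕ → (Fin d → ℝ) → ℝ)
    (hp_meas : ∀ t, Measurable (p t)) (hp_nonneg : ∀ t x, 0 ≤ p t x)
    (hp0_int : ∫ x, p 0 x = 1)
    (hp_rec : ∀ t y, p (t + 1) y = ∫ x, k x y * p t x)
    (P : ℕ → Measure (Fin d → ℝ))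
    (hP : ∀ t, P t = volume.withDensity (fun x => ENNReal.ofReal (p t x))) :
    ∀ ε > (0 : ℝ), ∀ t : ℕ,
      ∃ (K : ℕ → ℕ) (X : (i : ℕ) → Fin (K i) → Set (Fin d → ℝ))
        (xr : (i : ℕ) → Fin (K i) → (Fin d → ℝ)) (Phat : ℕ → Measure (Fin d → ℝ)),
        (∀ i j, MeasurableSet (X i j)) ∧
        (∀ i, Pairwise (Function.onFun Disjoint (X i))) ∧
        (∀ i, (⋃ j, X i j) = Set.univ) ∧
        (∀ i j, xr i j ∈ X i j) ∧
        Phat 0 = P 0 ∧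
        (∀ i, Phat (i + 1) =
          ∑ j, Phat i (X i j) •
            volume.withDensity (fun y => ENNReal.ofReal (k (xr i j) y))) ∧
        tv (P t) (Phat t) ≤ ε := by
  classical
  intro ε hε t
  have hkx : ∀ x, Measurable (k x) := fun x => hk_meas.of_uncurry_left
  have hky : ∀ y, Measurable (fun x => k x y) := fun y => hk_meas.of_uncurry_right
  have hkint : ∀ x, Integrable (k x) volume := kernel_integrable k hk_meas hk_prob
  have hlint1 : ∀ x, (∫⁻ y, ENNReal.ofReal (k x y)) = 1 := by
    intro x
    rw [← ofReal_integral_eq_lintegral_ofReal (hkint x) (ae_of_all _ (hk_nonneg x)), hk_prob]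
    exact ENNReal.ofReal_one
  set δ : ℝ := ε / (t + 1) with hδdef
  have hδ : 0 < δ := by positivity
  have hstep := fun q => step_lemma k hk_meas hk_nonneg hk_prob hk_cont δ q
  choose Kf Xf xrf hXm hXd hXu hxrX hbound using hstep
  set phat : ℕ → (Fin d → ℝ) → ℝ := fun n => Nat.rec (p 0)
    (fun _ q => fun y => ∑ j, (∫ x in Xf q j, q x) * k (xrf q j) y) n with hphat
  have phat0 : phat 0 = p 0 := rfl
  have phatsucc : ∀ i, phat (i + 1) =
      fun y => ∑ j, (∫ x in Xf (phat i) j, phat i x) * k (xrf (phat i) j) y := fun i => rfl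
  have hp0_integrable : Integrable (p 0) volume := by
    by_contra h
    have h2 := hp0_int
    rw [integral_undef h] at h2
    exact one_ne_zero h2.symm
  -- invariants of phat
  have inv : ∀ i, Measurable (phat i) ∧ (∀ x, 0 ≤ phat i x) ∧ Integrable (phat i) volume ∧
      (∫ x, phat i x) = 1 := by
    intro i
    induction i with
    | zero => exact ⟨hp_meas 0, hp_nonneg 0, hp0_integrable, hp0_int⟩
    | succ i ih =>
      obtain ⟨hm, h0, hqint, h1⟩ := ih
      have hw0 : ∀ j, 0 ≤ ∫ x in Xf (phat i) j, phat i x :=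
        fun j => setIntegral_nonneg (hXm _ j) (fun x _ => h0 x)
      have hwsum : ∑ j, (∫ x in Xf (phat i) j, phat i x) = 1 := by
        rw [← integral_biUnion_finset Finset.univ (fun j _ => hXm _ j)
          (fun a _ b _ hab => hXd _ hab) (fun j _ => hqint.integrableOn)]
        have huniv : (⋃ j ∈ (Finset.univ : Finset (Fin (Kf (phat i)))), Xf (phat i) j)
            = Set.univ := by
          simpa using hXu (phat i)
        rw [huniv, Measure.restrict_univ, h1]
      refine ⟨?_, ?_, ?_, ?_⟩
      · rw [phatsucc]
        exact Finset.measurable_sum _ (fun j _ => ((hkx _).const_mul _))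
      · intro x
        rw [phatsucc]
        exact Finset.sum_nonneg fun j _ => mul_nonneg (hw0 j) (hk_nonneg _ _)
      · rw [phatsucc]
        exact integrable_finset_sum _ (fun j _ => (hkint _).const_mul _)
      · rw [phatsucc, integral_finset_sum _ (fun j _ => (hkint _).const_mul _)]
        simp only [integral_const_mul, hk_prob, mul_one]
        exact hwsum
  -- invariants of p
  have hp_lint : ∀ i, Integrable (p i) volume ∧ (∫⁻ y, ENNReal.ofReal (p i y)) = 1 := by
    intro i
    induction i with
    | zero =>
      refine ⟨hp0_integrable, ?_⟩
      rw [← ofReal_integral_eq_lintegral_ofReal hp0_integrable (ae_of_all _ (hp_nonneg 0)),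
        hp0_int, ENNReal.ofReal_one]
    | succ i ih =>
      obtain ⟨ihint, ihl⟩ := ih
      have hprodmeas : Measurable (fun z : (Fin d → ℝ) × (Fin d → ℝ) =>
          ENNReal.ofReal (k z.1 z.2) * ENNReal.ofReal (p i z.1)) :=
        (hk_meas.ennreal_ofReal).mul (((hp_meas i).comp measurable_fst).ennreal_ofReal)
      have hGmeas : Measurable (fun y => ∫⁻ x, ENNReal.ofReal (k x y) * ENNReal.ofReal (p i x)) :=
        Measurable.lintegral_prod_left hprodmeas
      have hGint : (∫⁻ y, ∫⁻ x, ENNReal.ofReal (k x y) * ENNReal.ofReal (p i x)) = 1 := by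
        rw [← lintegral_lintegral_swap hprodmeas.aemeasurable]
        calc ∫⁻ x, ∫⁻ y, ENNReal.ofReal (k x y) * ENNReal.ofReal (p i x)
            = ∫⁻ x, (∫⁻ y, ENNReal.ofReal (k x y)) * ENNReal.ofReal (p i x) := by
              apply lintegral_congr
              intro x
              rw [lintegral_mul_const _ ((hkx x).ennreal_ofReal)]
          _ = ∫⁻ x, ENNReal.ofReal (p i x) := by
              apply lintegral_congr
              intro x
              rw [hlint1, one_mul]
          _ = 1 := ihl
      have hGfin : ∀ᵐ y, (∫⁻ x, ENNReal.ofReal (k x y) * ENNReal.ofReal (p i x)) < ⊤ :=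
        ae_lt_top hGmeas (by rw [hGint]; exact one_ne_top)
      have haeq : ∀ᵐ y : (Fin d → ℝ), ENNReal.ofReal (p (i + 1) y)
          = ∫⁻ x, ENNReal.ofReal (k x y) * ENNReal.ofReal (p i x) := by
        filter_upwards [hGfin] with y hy
        have hmeasxy : Measurable (fun x => k x y * p i x) := (hky y).mul (hp_meas i)
        have hofeq : (∫⁻ x, ENNReal.ofReal (k x y * p i x))
            = ∫⁻ x, ENNReal.ofReal (k x y) * ENNReal.ofReal (p i x) := by
          apply lintegral_congr
          intro x
          rw [ENNReal.ofReal_mul (hk_nonneg x y)]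
        have hfinint : Integrable (fun x => k x y * p i x) volume := by
          refine ⟨hmeasxy.aestronglyMeasurable, ?_⟩
          rw [hasFiniteIntegral_iff_ofReal
            (ae_of_all _ fun x => mul_nonneg (hk_nonneg x y) (hp_nonneg i x))]
          rw [hofeq]
          exact hy
        rw [hp_rec i y, ofReal_integral_eq_lintegral_ofReal hfinint
          (ae_of_all _ fun x => mul_nonneg (hk_nonneg x y) (hp_nonneg i x)), hofeq]
      constructor
      · refine ⟨(hp_meas (i + 1)).aestronglyMeasurable, ?_⟩
        rw [hasFiniteIntegral_iff_ofReal (ae_of_all _ (hp_nonneg (i + 1))),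
          lintegral_congr_ae haeq, hGint]
        exact one_lt_top
      · rw [lintegral_congr_ae haeq, hGint]
  -- the error recursion
  have herr : ∀ i, (∫⁻ y, (‖p i y - phat i y‖₊ : ℝ≥0∞)) ≤ (i : ℝ≥0∞) * ENNReal.ofReal δ := by
    intro i
    induction i with
    | zero =>
      rw [phat0]
      simp
    | succ i ih =>
      obtain ⟨hm, h0, hqint, h1⟩ := inv i
      obtain ⟨hpint, hplint⟩ := hp_lint i
      set q := phat i with hq
      set H : (Fin d → ℝ) → (Fin d → ℝ) → ℝ :=
        fun x y => ∑ j, (Xf q j).indicator (fun _ => k (xrf q j) y) x with hH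
      have hHuncmeas : Measurable (fun z : (Fin d → ℝ) × (Fin d → ℝ) => H z.1 z.2) := by
        apply Finset.measurable_sum
        intro j _
        have heq : (fun z : (Fin d → ℝ) × (Fin d → ℝ) =>
            (Xf q j).indicator (fun _ => k (xrf q j) z.2) z.1)
            = fun z => (Set.indicator (Xf q j) (fun _ => (1:ℝ)) z.1) * k (xrf q j) z.2 := by
          funext z
          by_cases hz : z.1 ∈ Xf q j <;> simp [Set.indicator, hz]
        show Measurable (fun z : (Fin d → ℝ) × (Fin d → ℝ) =>
            (Xf q j).indicator (fun _ => k (xrf q j) z.2) z.1)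
        rw [heq]
        exact (((measurable_const.indicator (hXm q j)).comp measurable_fst)).mul
          ((hkx _).comp measurable_snd)
      have hHx : ∀ x, Measurable (H x) := by
        intro x
        have : H x = fun y => (fun z : (Fin d → ℝ) × (Fin d → ℝ) => H z.1 z.2) (x, y) := rfl
        rw [this]
        exact hHuncmeas.comp (measurable_const.prodMk measurable_id)
      have hHint : ∀ y, Integrable (fun x => H x y * q x) volume := by
        intro y
        have heq : (fun x => H x y * q x)
            = fun x => ∑ j, (Xf q j).indicator (fun x' => k (xrf q j) y * q x') x := by
          funext x
          rw [hH]
          simp only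
          rw [Finset.sum_mul]
          apply Finset.sum_congr rfl
          intro j _
          by_cases hx : x ∈ Xf q j <;> simp [Set.indicator, hx]
        rw [heq]
        exact integrable_finset_sum _ (fun j _ => ((hqint.const_mul _).indicator (hXm q j)))
      have hphat1 : ∀ y, phat (i + 1) y = ∫ x, H x y * q x := by
        intro y
        have hys : phat (i + 1) y = ∑ j, (∫ x in Xf q j, q x) * k (xrf q j) y :=
          congrFun (phatsucc i) y
        rw [hys]
        have heq : (fun x => H x y * q x)
            = fun x => ∑ j, (Xf q j).indicator (fun x' => k (xrf q j) y * q x') x := by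
          funext x
          rw [hH]
          simp only
          rw [Finset.sum_mul]
          apply Finset.sum_congr rfl
          intro j _
          by_cases hx : x ∈ Xf q j <;> simp [Set.indicator, hx]
        rw [heq, integral_finset_sum _
          (fun j _ => ((hqint.const_mul _).indicator (hXm q j)))]
        apply Finset.sum_congr rfl
        intro j _
        rw [integral_indicator (hXm q j), integral_const_mul, mul_comm]
      have hHXval : ∀ j, ∀ x ∈ Xf q j, ∀ y, H x y = k (xrf q j) y := by
        intro j x hx y
        rw [hH]
        simp only
        rw [Finset.sum_eq_single j]
        · exact Set.indicator_of_mem hx _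
        · intro j' _ hj'
          exact Set.indicator_of_notMem (Set.disjoint_right.1 (hXd q hj') hx) _
        · intro hju
          exact absurd (Finset.mem_univ j) hju
      -- a.e. y integrability of the true propagation integrand
      have hprodmeas : Measurable (fun z : (Fin d → ℝ) × (Fin d → ℝ) =>
          ENNReal.ofReal (k z.1 z.2) * ENNReal.ofReal (p i z.1)) :=
        (hk_meas.ennreal_ofReal).mul (((hp_meas i).comp measurable_fst).ennreal_ofReal)
      have hGmeas : Measurable (fun y => ∫⁻ x, ENNReal.ofReal (k x y) * ENNReal.ofReal (p i x)) :=
        Measurable.lintegral_prod_left hprodmeas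
      have hGint : (∫⁻ y, ∫⁻ x, ENNReal.ofReal (k x y) * ENNReal.ofReal (p i x)) = 1 := by
        rw [← lintegral_lintegral_swap hprodmeas.aemeasurable]
        calc ∫⁻ x, ∫⁻ y, ENNReal.ofReal (k x y) * ENNReal.ofReal (p i x)
            = ∫⁻ x, (∫⁻ y, ENNReal.ofReal (k x y)) * ENNReal.ofReal (p i x) := by
              apply lintegral_congr
              intro x
              rw [lintegral_mul_const _ ((hkx x).ennreal_ofReal)]
          _ = ∫⁻ x, ENNReal.ofReal (p i x) := by
              apply lintegral_congr
              intro x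
              rw [hlint1, one_mul]
          _ = 1 := hplint
      have hGfin : ∀ᵐ y, (∫⁻ x, ENNReal.ofReal (k x y) * ENNReal.ofReal (p i x)) < ⊤ :=
        ae_lt_top hGmeas (by rw [hGint]; exact one_ne_top)
      have haeint : ∀ᵐ y : (Fin d → ℝ), Integrable (fun x => k x y * p i x) volume := by
        filter_upwards [hGfin] with y hy
        have hmeasxy : Measurable (fun x => k x y * p i x) := (hky y).mul (hp_meas i)
        refine ⟨hmeasxy.aestronglyMeasurable, ?_⟩
        rw [hasFiniteIntegral_iff_ofReal
          (ae_of_all _ fun x => mul_nonneg (hk_nonneg x y) (hp_nonneg i x))]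
        have hofeq : (∫⁻ x, ENNReal.ofReal (k x y * p i x))
            = ∫⁻ x, ENNReal.ofReal (k x y) * ENNReal.ofReal (p i x) := by
          apply lintegral_congr
          intro x
          rw [ENNReal.ofReal_mul (hk_nonneg x y)]
        rw [hofeq]
        exact hy
      -- pointwise bound
      have hptw : ∀ᵐ y : (Fin d → ℝ), (‖p (i + 1) y - phat (i + 1) y‖₊ : ℝ≥0∞) ≤
          ∫⁻ x, (ENNReal.ofReal (k x y) * (‖p i x - q x‖₊ : ℝ≥0∞)
            + (‖k x y - H x y‖₊ : ℝ≥0∞) * ENNReal.ofReal (q x)) := by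
        filter_upwards [haeint] with y hy
        rw [hp_rec i y, hphat1 y, ← integral_sub hy (hHint y)]
        refine le_trans (enorm_integral_le_lintegral_enorm _) (lintegral_mono fun x => ?_)
        show (‖k x y * p i x - H x y * q x‖₊ : ℝ≥0∞) ≤ _
        calc (‖k x y * p i x - H x y * q x‖₊ : ℝ≥0∞)
            = ENNReal.ofReal |k x y * p i x - H x y * q x| := Real.enorm_eq_ofReal_abs _
          _ ≤ ENNReal.ofReal (k x y * |p i x - q x| + |k x y - H x y| * q x) := by
              apply ENNReal.ofReal_le_ofReal
              have hring : k x y * p i x - H x y * q x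
                  = k x y * (p i x - q x) + (k x y - H x y) * q x := by ring
              rw [hring]
              refine le_trans (abs_add_le _ _) ?_
              rw [abs_mul, abs_mul, abs_of_nonneg (hk_nonneg x y), abs_of_nonneg (h0 x)]
          _ = ENNReal.ofReal (k x y) * (‖p i x - q x‖₊ : ℝ≥0∞)
              + (‖k x y - H x y‖₊ : ℝ≥0∞) * ENNReal.ofReal (q x) := by
              rw [ENNReal.ofReal_add (mul_nonneg (hk_nonneg x y) (abs_nonneg _))
                (mul_nonneg (abs_nonneg _) (h0 x)),
                ENNReal.ofReal_mul (hk_nonneg x y), ENNReal.ofReal_mul (abs_nonneg _),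
                ← enorm_eq_nnnorm, ← enorm_eq_nnnorm, Real.enorm_eq_ofReal_abs, Real.enorm_eq_ofReal_abs]
      have hDmeas : Measurable (fun x => (‖p i x - q x‖₊ : ℝ≥0∞)) := ((hp_meas i).sub hm).enorm
      have hsummeas : Measurable (fun z : (Fin d → ℝ) × (Fin d → ℝ) =>
          ENNReal.ofReal (k z.1 z.2) * (‖p i z.1 - q z.1‖₊ : ℝ≥0∞)
            + (‖k z.1 z.2 - H z.1 z.2‖₊ : ℝ≥0∞) * ENNReal.ofReal (q z.1)) := by
        apply Measurable.fun_add
        · exact (hk_meas.ennreal_ofReal).mul (hDmeas.comp measurable_fst)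
        · exact ((hk_meas.sub hHuncmeas).enorm).mul
            ((hm.comp measurable_fst).ennreal_ofReal)
      have hT : (∫⁻ y, ∫⁻ x, (ENNReal.ofReal (k x y) * (‖p i x - q x‖₊ : ℝ≥0∞)
            + (‖k x y - H x y‖₊ : ℝ≥0∞) * ENNReal.ofReal (q x)))
          = (∫⁻ x, (‖p i x - q x‖₊ : ℝ≥0∞))
            + ∫⁻ x, (∫⁻ y, (‖k x y - H x y‖₊ : ℝ≥0∞)) * ENNReal.ofReal (q x) := by
        rw [← lintegral_lintegral_swap hsummeas.aemeasurable]
        calc ∫⁻ x, ∫⁻ y, (ENNReal.ofReal (k x y) * (‖p i x - q x‖₊ : ℝ≥0∞)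
              + (‖k x y - H x y‖₊ : ℝ≥0∞) * ENNReal.ofReal (q x))
            = ∫⁻ x, ((‖p i x - q x‖₊ : ℝ≥0∞)
              + (∫⁻ y, (‖k x y - H x y‖₊ : ℝ≥0∞)) * ENNReal.ofReal (q x)) := by
              apply lintegral_congr
              intro x
              rw [lintegral_add_left (((hkx x).ennreal_ofReal).mul_const _),
                lintegral_mul_const _ ((hkx x).ennreal_ofReal),
                lintegral_mul_const (f := fun y => (‖k x y - H x y‖₊ : ℝ≥0∞)) _ (((hkx x).sub (hHx x)).enorm), hlint1, one_mul]
          _ = _ := lintegral_add_left hDmeas _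
      have hT2 : (∫⁻ x, (∫⁻ y, (‖k x y - H x y‖₊ : ℝ≥0∞)) * ENNReal.ofReal (q x))
          = ∑ j, ∫⁻ x in Xf q j, (∫⁻ y, (‖k x y - k (xrf q j) y‖₊ : ℝ≥0∞))
              * ENNReal.ofReal (q x) := by
        have huniv : (⋃ j ∈ (Finset.univ : Finset (Fin (Kf q))), Xf q j) = Set.univ := by
          simpa using hXu q
        have hdisj : Set.PairwiseDisjoint
            (↑(Finset.univ : Finset (Fin (Kf q))) : Set (Fin (Kf q))) (Xf q) := by
          intro a _ b _ hab
          exact hXd q hab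
        rw [← setLIntegral_univ, ← huniv,
          lintegral_biUnion_finset hdisj (fun b _ => hXm q b)]
        apply Finset.sum_congr rfl
        intro j _
        apply setLIntegral_congr_fun (hXm q j)
        intro x hx
        beta_reduce
        congr 2
        funext y
        rw [hHXval j x hx y]
      calc (∫⁻ y, (‖p (i + 1) y - phat (i + 1) y‖₊ : ℝ≥0∞))
          ≤ ∫⁻ y, ∫⁻ x, (ENNReal.ofReal (k x y) * (‖p i x - q x‖₊ : ℝ≥0∞)
              + (‖k x y - H x y‖₊ : ℝ≥0∞) * ENNReal.ofReal (q x)) := lintegral_mono_ae hptw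
        _ = (∫⁻ x, (‖p i x - q x‖₊ : ℝ≥0∞))
              + ∫⁻ x, (∫⁻ y, (‖k x y - H x y‖₊ : ℝ≥0∞)) * ENNReal.ofReal (q x) := hT
        _ ≤ (i : ℝ≥0∞) * ENNReal.ofReal δ + ENNReal.ofReal δ := by
            refine add_le_add ih ?_
            rw [hT2]
            exact hbound q hδ hm h0 hqint h1
        _ = ((i + 1 : ℕ) : ℝ≥0∞) * ENNReal.ofReal δ := by
            push_cast
            ring
  -- assemble
  refine ⟨fun i => Kf (phat i), fun i => Xf (phat i), fun i => xrf (phat i),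
    fun i => volume.withDensity (fun y => ENNReal.ofReal (phat i y)),
    fun i => hXm (phat i), fun i => hXd (phat i), fun i => hXu (phat i),
    fun i => hxrX (phat i), ?_, ?_, ?_⟩
  · show volume.withDensity (fun y => ENNReal.ofReal (phat 0 y)) = P 0
    rw [hP 0]
    have hdefeq : (fun x => ENNReal.ofReal (phat 0 x)) = fun x => ENNReal.ofReal (p 0 x) := rfl
    rw [hdefeq]
  · -- the recursion identity
    intro i
    show volume.withDensity (fun y => ENNReal.ofReal (phat (i + 1) y))
      = ∑ j, (volume.withDensity fun y => ENNReal.ofReal (phat i y)) (Xf (phat i) j) •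
          volume.withDensity fun y => ENNReal.ofReal (k (xrf (phat i) j) y)
    obtain ⟨hm, h0, hqint, h1⟩ := inv i
    have hw0 : ∀ j, 0 ≤ ∫ x in Xf (phat i) j, phat i x :=
      fun j => setIntegral_nonneg (hXm _ j) (fun x _ => h0 x)
    have hWeq : ∀ j, (volume.withDensity (fun y => ENNReal.ofReal (phat i y))) (Xf (phat i) j)
        = ENNReal.ofReal (∫ x in Xf (phat i) j, phat i x) := by
      intro j
      rw [withDensity_apply _ (hXm (phat i) j),
        ← ofReal_integral_eq_lintegral_ofReal hqint.integrableOn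
          (ae_restrict_of_ae (ae_of_all _ h0))]
    have hsum : ∀ s : Finset (Fin (Kf (phat i))),
        (∑ j ∈ s, ENNReal.ofReal (∫ x in Xf (phat i) j, phat i x) •
          volume.withDensity (fun y => ENNReal.ofReal (k (xrf (phat i) j) y)))
        = volume.withDensity (fun y => ∑ j ∈ s,
            ENNReal.ofReal (∫ x in Xf (phat i) j, phat i x)
              * ENNReal.ofReal (k (xrf (phat i) j) y)) := by
      intro s
      induction s using Finset.induction_on with
      | empty => simp
      | @insert a s' hnot ihs =>
        rw [Finset.sum_insert hnot, ihs]
        have heq2 : (fun y => ∑ j ∈ insert a s',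
            ENNReal.ofReal (∫ x in Xf (phat i) j, phat i x)
              * ENNReal.ofReal (k (xrf (phat i) j) y))
            = (fun y => ENNReal.ofReal (∫ x in Xf (phat i) a, phat i x)
                * ENNReal.ofReal (k (xrf (phat i) a) y))
              + fun y => ∑ j ∈ s', ENNReal.ofReal (∫ x in Xf (phat i) j, phat i x)
                * ENNReal.ofReal (k (xrf (phat i) j) y) := by
          funext y
          simp [Finset.sum_insert hnot]
        rw [heq2, withDensity_add_left (f := fun y => ENNReal.ofReal (∫ x in Xf (phat i) a, phat i x)
                * ENNReal.ofReal (k (xrf (phat i) a) y)) (measurable_const.mul ((hkx _).ennreal_ofReal))]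
        congr 1
        have hsmul : (fun y => ENNReal.ofReal (∫ x in Xf (phat i) a, phat i x)
            * ENNReal.ofReal (k (xrf (phat i) a) y))
            = (ENNReal.ofReal (∫ x in Xf (phat i) a, phat i x))
              • (fun y => ENNReal.ofReal (k (xrf (phat i) a) y)) := rfl
        rw [hsmul, withDensity_smul _ ((hkx _).ennreal_ofReal)]
    calc volume.withDensity (fun y => ENNReal.ofReal (phat (i + 1) y))
        = volume.withDensity (fun y => ∑ j,
            ENNReal.ofReal (∫ x in Xf (phat i) j, phat i x)
              * ENNReal.ofReal (k (xrf (phat i) j) y)) := by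
          congr 1
          funext y
          rw [congrFun (phatsucc i) y,
            ENNReal.ofReal_sum_of_nonneg (fun j _ => mul_nonneg (hw0 j) (hk_nonneg _ _))]
          apply Finset.sum_congr rfl
          intro j _
          rw [ENNReal.ofReal_mul (hw0 j)]
      _ = ∑ j, ENNReal.ofReal (∫ x in Xf (phat i) j, phat i x) •
            volume.withDensity (fun y => ENNReal.ofReal (k (xrf (phat i) j) y)) :=
          (hsum Finset.univ).symm
      _ = ∑ j, (volume.withDensity (fun y => ENNReal.ofReal (phat i y))) (Xf (phat i) j) •
            volume.withDensity (fun y => ENNReal.ofReal (k (xrf (phat i) j) y)) := by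
          apply Finset.sum_congr rfl
          intro j _
          rw [hWeq j]
  · -- the tv bound
    show tv (P t) (volume.withDensity fun y => ENNReal.ofReal (phat t y)) ≤ ε
    unfold tv
    obtain ⟨hm, h0, hqint, h1⟩ := inv t
    obtain ⟨hpint, hplint⟩ := hp_lint t
    have hsub_int : Integrable (fun y => p t y - phat t y) volume := hpint.sub hqint
    have htδ : (t : ℝ) * δ ≤ ε := by
      have hle : (t : ℝ) ≤ t + 1 := by linarith
      calc (t : ℝ) * δ ≤ ((t : ℝ) + 1) * δ :=
            mul_le_mul_of_nonneg_right hle hδ.le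
        _ = ε := by
            rw [hδdef]
            field_simp
    have habs : (∫ y, |p t y - phat t y|) ≤ (t : ℝ) * δ := by
      have h2 : ENNReal.ofReal (∫ y, |p t y - phat t y|) ≤ ENNReal.ofReal ((t : ℝ) * δ) := by
        rw [ofReal_integral_eq_lintegral_ofReal hsub_int.abs (ae_of_all _ fun y => abs_nonneg _)]
        have heq3 : (∫⁻ y, ENNReal.ofReal |p t y - phat t y|)
            = ∫⁻ y, (‖p t y - phat t y‖₊ : ℝ≥0∞) :=
          lintegral_congr fun y => (Real.enorm_eq_ofReal_abs _).symm
        rw [heq3]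
        refine le_trans (herr t) ?_
        rw [ENNReal.ofReal_mul (by positivity : (0:ℝ) ≤ (t : ℝ)), ENNReal.ofReal_natCast]
      exact (ENNReal.ofReal_le_ofReal_iff (by positivity)).1 h2
    have hA : ∀ A : Set (Fin d → ℝ), MeasurableSet A →
        |((P t) A).toReal
          - ((volume.withDensity fun y => ENNReal.ofReal (phat t y)) A).toReal| ≤ ε := by
      intro A hAm
      have e1 : ((P t) A).toReal = ∫ y in A, p t y := by
        rw [hP t, withDensity_apply _ hAm]
        exact (integral_eq_lintegral_of_nonneg_ae
          (ae_restrict_of_ae (ae_of_all _ (hp_nonneg t)))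
          ((hp_meas t).aestronglyMeasurable.restrict)).symm
      have e2 : ((volume.withDensity fun y => ENNReal.ofReal (phat t y)) A).toReal
          = ∫ y in A, phat t y := by
        rw [withDensity_apply _ hAm]
        exact (integral_eq_lintegral_of_nonneg_ae
          (ae_restrict_of_ae (ae_of_all _ h0)) (hm.aestronglyMeasurable.restrict)).symm
      rw [e1, e2]
      have hstep2 : |(∫ y in A, p t y) - ∫ y in A, phat t y| ≤ ∫ y, |p t y - phat t y| := by
        rw [← integral_sub hpint.integrableOn hqint.integrableOn]
        calc |∫ y in A, (p t y - phat t y)| ≤ ∫ y in A, |p t y - phat t y| := by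
              have hnorm := norm_integral_le_integral_norm
                (μ := volume.restrict A) (fun y => p t y - phat t y)
              simpa [Real.norm_eq_abs] using hnorm
          _ ≤ ∫ y, |p t y - phat t y| :=
              integral_mono_measure Measure.restrict_le_self
                (ae_of_all _ fun y => abs_nonneg _) hsub_int.abs
      linarith
    have hnon : Nonempty {A : Set (Fin d → ℝ) // MeasurableSet A} :=
      ⟨⟨∅, MeasurableSet.empty⟩⟩
    exact ciSup_le fun A => hA A.1 A.2
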